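/- With F and F* as in Theorem 1 of the paper: if η(1 + iα + jβ) = η(1 + iα) for all i, j ∈ F_p, then for all b_1, b_2 ∈ F_p, Σ_{y_1, y_2 ∈ F_p} η(1 + y_1 α + y_2 β) ζ_{p^k}^{g(y_1)} ζ_p^{−y_1 y_2 + b_1 y_1 + b_2 y_2} = η(1 + b_2 α) p ζ_p^{b_1 b_2} ζ_{p^k}^{g(b_2)}, and hence F* is generalized bent. If moreover there exist i_1, i_2 ∈ F_p with η(1 + i_1 α) ≠ η(1 + i_2 α), then F* is non-weakly regular. -/

import Mathlib

set_option linter.unusedSectionVars false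
set_option maxHeartbeats 1000000


open Finset

/-- `chr m z = ζ_m ^ z`, the additive character sending `z ∈ ℤ/m` to `e^{2πi z/m}`. -/
noncomputable def chr (m : ℕ) (z : ZMod m) : ℂ :=
  Complex.exp (2 * Real.pi * Complex.I * (z.val : ℂ) / (m : ℂ))

/-- The lift `ℤ/p → ℤ/p^k`, `z ↦ p^{k-1} z`. -/
def lift (p k : ℕ) (z : ZMod p) : ZMod (p ^ k) :=
  (p ^ (k - 1) : ZMod (p ^ k)) * (z.val : ZMod (p ^ k))

/-- Walsh transform of a generalized function on `F_{p^m} × F_p × F_p`, where the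
inner product is `⟨(a,b₁,b₂),(x,y₁,y₂)⟩ = Tr(ax) + b₁y₁ + b₂y₂`. -/
noncomputable def walshF (p k : ℕ) [NeZero p] (F : Type*) [Field F] [Fintype F]
    [Algebra (ZMod p) F] (f : F → ZMod p → ZMod p → ZMod (p ^ k))
    (a : F) (b₁ b₂ : ZMod p) : ℂ :=
  ∑ x : F, ∑ y₁ : ZMod p, ∑ y₂ : ZMod p,
    chr (p ^ k) (f x y₁ y₂) *
      chr p (-(Algebra.trace (ZMod p) F (a * x) + b₁ * y₁ + b₂ * y₂))

noncomputable def zet (m : ℕ) : ℂ := Complex.exp (2 * Real.pi * Complex.I / m)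

lemma zet_pow (m : ℕ) [NeZero m] : zet m ^ m = 1 := by
  rw [zet, ← Complex.exp_nat_mul]
  have : (m:ℂ) * (2 * Real.pi * Complex.I / m) = 2 * Real.pi * Complex.I := by
    rw [mul_comm, div_mul_cancel₀ _ (show (m:ℂ) ≠ 0 by exact_mod_cast NeZero.ne m)]
  rw [this]
  simpa [mul_comm, mul_assoc] using Complex.exp_two_pi_mul_I

lemma chr_eq (m : ℕ) [NeZero m] (z : ZMod m) : chr m z = zet m ^ z.val := by
  rw [chr, zet, ← Complex.exp_nat_mul]
  ring_nf

noncomputable def stdChar (m : ℕ) [NeZero m] : AddChar (ZMod m) ℂ :=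
  AddChar.zmodChar m (zet_pow m)

lemma stdChar_apply (m : ℕ) [NeZero m] (z : ZMod m) : stdChar m z = chr m z := by
  rw [stdChar, AddChar.zmodChar_apply, chr_eq]

lemma chr_add (m : ℕ) [NeZero m] (a b : ZMod m) : chr m (a + b) = chr m a * chr m b := by
  rw [← stdChar_apply, ← stdChar_apply, ← stdChar_apply, AddChar.map_add_eq_mul]

lemma chr_zero (m : ℕ) [NeZero m] : chr m 0 = 1 := by
  rw [← stdChar_apply, AddChar.map_zero_eq_one]

lemma chr_pow_self (m : ℕ) [NeZero m] (z : ZMod m) : chr m z ^ m = 1 := by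
  rw [chr_eq, ← pow_mul, mul_comm, pow_mul, zet_pow, one_pow]

lemma chr_ne_zero (m : ℕ) [NeZero m] (z : ZMod m) : chr m z ≠ 0 := Complex.exp_ne_zero _

lemma abs_chr (m : ℕ) [NeZero m] (z : ZMod m) : ‖chr m z‖ = 1 := by
  rw [chr]
  have : 2 * (Real.pi:ℂ) * Complex.I * (z.val : ℂ) / (m : ℂ)
      = ((2 * Real.pi * z.val / m : ℝ) : ℂ) * Complex.I := by
    push_cast; ring
  rw [this, Complex.norm_exp_ofReal_mul_I]



lemma chr_lift (p k : ℕ) [NeZero p] (hk : 1 ≤ k) (z : ZMod p) :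
    chr (p^k) (lift p k z) = chr p z := by
  haveI : NeZero (p^k) := ⟨pow_ne_zero k (NeZero.ne p)⟩
  have hcast : lift p k z = ((p^(k-1) * z.val : ℕ) : ZMod (p^k)) := by
    rw [lift]; push_cast; ring
  have hlt : p^(k-1) * z.val < p^k := by
    calc p^(k-1) * z.val < p^(k-1) * p :=
          (Nat.mul_lt_mul_left (Nat.pow_pos (Nat.pos_of_ne_zero (NeZero.ne p)))).mpr (ZMod.val_lt z)
      _ = p^k := by rw [← pow_succ, Nat.sub_add_cancel hk]
  have hval : (lift p k z).val = p^(k-1) * z.val := by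
    rw [hcast, ZMod.val_natCast, Nat.mod_eq_of_lt hlt]
  rw [chr, chr, hval]
  congr 1
  have hp0 : (p:ℂ) ≠ 0 := by exact_mod_cast NeZero.ne p
  have hpk : (p:ℂ)^(k-1) ≠ 0 := pow_ne_zero _ hp0
  have hpow : ((p^k : ℕ):ℂ) = (p:ℂ)^(k-1) * (p:ℂ) := by
    push_cast
    conv_lhs => rw [← Nat.sub_add_cancel hk]
    rw [pow_succ]
  rw [hpow]
  push_cast
  field_simp


lemma stdChar_primitive (p : ℕ) [NeZero p] : AddChar.IsPrimitive (stdChar p) :=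
  AddChar.zmodChar_primitive_of_primitive_root p (Complex.isPrimitiveRoot_exp p (NeZero.ne p))

lemma chr_eq_one_iff (p : ℕ) [NeZero p] (z : ZMod p) : chr p z = 1 ↔ z = 0 := by
  rw [← stdChar_apply]
  exact (stdChar_primitive p).zmod_char_eq_one_iff p z

lemma chr_orth (p : ℕ) [NeZero p] (c : ZMod p) :
    ∑ y : ZMod p, chr p (y * c) = if c = 0 then (p : ℂ) else 0 := by
  have h := AddChar.sum_mulShift c (stdChar_primitive p)
  simp only [stdChar_apply, ZMod.card] at h
  rw [h]
  split_ifs <;> simp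

lemma conj_chr (m : ℕ) [NeZero m] (z : ZMod m) :
    (starRingEnd ℂ) (chr m z) = chr m (-z) := by
  have h1 : chr m z * chr m (-z) = 1 := by rw [← chr_add, add_neg_cancel, chr_zero]
  have h2 : chr m z * (starRingEnd ℂ) (chr m z) = 1 := by
    rw [Complex.mul_conj, Complex.normSq_eq_norm_sq, abs_chr]; norm_num
  exact mul_left_cancel₀ (chr_ne_zero m z) (h2.trans h1.symm)

section Field

variable (p : ℕ) [NeZero p] [Fact p.Prime] (F : Type*) [Field F] [Fintype F]
  [DecidableEq F] [Algebra (ZMod p) F]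

noncomputable def psiF : AddChar F ℂ :=
  (stdChar p).compAddMonoidHom (Algebra.trace (ZMod p) F).toAddMonoidHom

lemma psiF_apply (x : F) : psiF p F x = chr p (Algebra.trace (ZMod p) F x) :=
  stdChar_apply p _

noncomputable def chiF : MulChar F ℂ :=
  (quadraticChar F).ringHomComp (Int.castRingHom ℂ)

lemma chiF_apply (x : F) : chiF F x = ((quadraticChar F x : ℤ) : ℂ) := rfl

lemma charF : CharP F p := charP_of_injective_algebraMap (algebraMap (ZMod p) F).injective p

lemma ringCharF : ringChar F = p := by
  haveI := charF p F
  exact (ringChar.eq F p).symm ▸ rfl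

lemma chiF_mul_self {x : F} (hx : x ≠ 0) : chiF F x * chiF F x = 1 := by
  rw [chiF_apply, ← Int.cast_mul, ← sq, quadraticChar_sq_one hx, Int.cast_one]

lemma chiF_ne_zero {x : F} (hx : x ≠ 0) : chiF F x ≠ 0 := fun h => by
  have := chiF_mul_self F hx; rw [h, mul_zero] at this; exact zero_ne_one this

lemma chiF_inv {x : F} (hx : x ≠ 0) : chiF F x⁻¹ = chiF F x := by
  have h1 : chiF F x * chiF F x⁻¹ = 1 := by
    rw [← map_mul, mul_inv_cancel₀ hx, map_one]
  exact mul_left_cancel₀ (chiF_ne_zero F hx) (h1.trans (chiF_mul_self F hx).symm)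

lemma psiF_ne_one (x : F) (hx : Algebra.trace (ZMod p) F x ≠ 0) : psiF p F ≠ 1 := by
  intro h
  have := congrFun (congrArg (fun ψ : AddChar F ℂ => (ψ : F → ℂ)) h) x
  simp only [AddChar.one_apply] at this
  rw [psiF_apply] at this
  exact hx ((chr_eq_one_iff p _).mp this)

lemma trace_ne : ∃ x : F, Algebra.trace (ZMod p) F x ≠ 0 := by
  have h := Algebra.trace_ne_zero (ZMod p) F
  rw [DFunLike.ne_iff] at h
  simpa using h

lemma psiF_primitive : AddChar.IsPrimitive (psiF p F) := by
  obtain ⟨x, hx⟩ := trace_ne p F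
  exact AddChar.IsPrimitive.of_ne_one (psiF_ne_one p F x hx)

lemma chiF_quadratic : (chiF F).IsQuadratic :=
  (quadraticChar_isQuadratic F).comp _

lemma chiF_ne_one (h2 : ringChar F ≠ 2) : chiF F ≠ 1 := fun h =>
  quadraticChar_ne_one h2 ((MulChar.ringHomComp_eq_one_iff Int.cast_injective).mp h)

lemma conj_gauss :
    (starRingEnd ℂ) (gaussSum (chiF F) (psiF p F)) = gaussSum (chiF F) (psiF p F)⁻¹ := by
  rw [gaussSum, gaussSum, map_sum]
  refine Finset.sum_congr rfl fun x _ => ?_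
  rw [map_mul, AddChar.inv_apply, chiF_apply, map_intCast]
  congr 1
  rw [psiF_apply, psiF_apply, conj_chr]
  congr 1
  simp

lemma gauss_mul_conj (h2 : ringChar F ≠ 2) :
    gaussSum (chiF F) (psiF p F) * (starRingEnd ℂ) (gaussSum (chiF F) (psiF p F))
      = (Fintype.card F : ℂ) := by
  rw [conj_gauss]
  have := gaussSum_mul_gaussSum_eq_card (chiF_ne_one F h2) (psiF_primitive p F)
  rwa [(chiF_quadratic F).inv] at this

lemma sum_sq (h2 : ringChar F ≠ 2) {c : F} (hc : c ≠ 0) :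
    ∑ x : F, psiF p F (c * x ^ 2) = chiF F c * gaussSum (chiF F) (psiF p F) := by
  have h1 : ∑ x : F, psiF p F (c * x ^ 2)
      = ∑ t : F, ∑ x ∈ univ.filter (fun x : F => x ^ 2 = t), psiF p F (c * t) :=
    (Finset.sum_fiberwise' univ (fun x : F => x ^ 2) (fun t => psiF p F (c * t))).symm
  rw [h1]
  have h2' : ∀ t : F, ∑ _x ∈ univ.filter (fun x : F => x ^ 2 = t), psiF p F (c * t)
      = ((quadraticChar F t : ℤ) : ℂ) * psiF p F (c * t) + psiF p F (c * t) := by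
    intro t
    rw [Finset.sum_const, nsmul_eq_mul]
    have hcnt := quadraticChar_card_sqrts h2 t
    have : ((univ.filter (fun x : F => x ^ 2 = t)).card : ℂ)
        = ((quadraticChar F t : ℤ) : ℂ) + 1 := by
      have : (({x : F | x ^ 2 = t}.toFinset.card : ℤ) : ℂ) = ((quadraticChar F t + 1 : ℤ) : ℂ) := by
        exact_mod_cast congrArg (fun n : ℤ => (n : ℂ)) hcnt
      rw [Set.toFinset_setOf] at this
      push_cast at this ⊢
      linear_combination this
    rw [this]; ring
  rw [Finset.sum_congr rfl (fun t _ => h2' t), Finset.sum_add_distrib]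
  have h3 : ∑ t : F, psiF p F (c * t) = 0 := by
    rw [Fintype.sum_bijective (fun t : F => c * t) ((Equiv.mulLeft₀ c hc).bijective)
      _ (fun t => psiF p F t) (fun t => rfl)]
    exact AddChar.sum_eq_zero_of_ne_one (by
      obtain ⟨x, hx⟩ := trace_ne p F
      exact psiF_ne_one p F x hx)
  have h4 : ∑ t : F, ((quadraticChar F t : ℤ) : ℂ) * psiF p F (c * t)
      = chiF F c * gaussSum (chiF F) (psiF p F) := by
    have hu : IsUnit c := isUnit_iff_ne_zero.mpr hc
    have hms := gaussSum_mulShift (chiF F) (psiF p F) hu.unit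
    have h5 : gaussSum (chiF F) (AddChar.mulShift (psiF p F) hu.unit)
        = ∑ t : F, ((quadraticChar F t : ℤ) : ℂ) * psiF p F (c * t) := by
      rw [gaussSum]
      refine Finset.sum_congr rfl fun t _ => ?_
      rw [AddChar.mulShift_apply, chiF_apply]
      congr 2
    rw [h5] at hms
    have hcu : ((hu.unit : F)) = c := rfl
    rw [hcu] at hms
    calc ∑ t : F, ((quadraticChar F t : ℤ) : ℂ) * psiF p F (c * t)
        = 1 * ∑ t : F, ((quadraticChar F t : ℤ) : ℂ) * psiF p F (c * t) := (one_mul _).symm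
      _ = chiF F c * chiF F c * ∑ t : F, ((quadraticChar F t : ℤ) : ℂ) * psiF p F (c * t) := by
          rw [chiF_mul_self F hc]
      _ = chiF F c * gaussSum (chiF F) (psiF p F) := by rw [mul_assoc, hms]
  rw [h3, h4, add_zero]

lemma key (h2 : ringChar F ≠ 2) {δ : F} (hδ : δ ≠ 0) (a : F) :
    ∑ x : F, psiF p F (-(x ^ 2) / (4 * δ) - a * x)
      = chiF F (-1) * chiF F δ * psiF p F (δ * a ^ 2) * gaussSum (chiF F) (psiF p F) := by
  have h2' : (2 : F) ≠ 0 := by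
    intro h
    exact h2 ((CharP.ringChar_of_prime_eq_zero Nat.prime_two (by exact_mod_cast h)).symm ▸ rfl)
  have h4 : (4 : F) ≠ 0 := by
    intro h
    apply h2'
    have : (2 : F) * 2 = 4 := by norm_num
    rcases mul_eq_zero.mp (this.trans h) with h' | h' <;> exact h'
  set c : F := -(4 * δ)⁻¹ with hcdef
  have hc : c ≠ 0 := neg_ne_zero.mpr (inv_ne_zero (mul_ne_zero h4 hδ))
  have hsq : ∀ x : F, -(x ^ 2) / (4 * δ) - a * x = c * (x + 2 * δ * a) ^ 2 + δ * a ^ 2 := by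
    intro x
    rw [hcdef]
    field_simp
    ring
  calc ∑ x : F, psiF p F (-(x ^ 2) / (4 * δ) - a * x)
      = ∑ x : F, psiF p F (c * (x + 2 * δ * a) ^ 2) * psiF p F (δ * a ^ 2) := by
        refine Finset.sum_congr rfl fun x _ => ?_
        rw [hsq x, AddChar.map_add_eq_mul]
    _ = (∑ x : F, psiF p F (c * (x + 2 * δ * a) ^ 2)) * psiF p F (δ * a ^ 2) := by
        rw [← Finset.sum_mul]
    _ = (∑ u : F, psiF p F (c * u ^ 2)) * psiF p F (δ * a ^ 2) := by
        congr 1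
        exact Fintype.sum_equiv (Equiv.addRight (2 * δ * a))
          (fun x => psiF p F (c * (x + 2 * δ * a) ^ 2))
          (fun u => psiF p F (c * u ^ 2)) (fun x => rfl)
    _ = chiF F c * gaussSum (chiF F) (psiF p F) * psiF p F (δ * a ^ 2) := by
        rw [sum_sq p F h2 hc]
    _ = chiF F (-1) * chiF F δ * psiF p F (δ * a ^ 2) * gaussSum (chiF F) (psiF p F) := by
        have hcc : c = (-1) * (2⁻¹ * 2⁻¹) * δ⁻¹ := by
          have h22 : (2 : F)⁻¹ * 2⁻¹ = 4⁻¹ := by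
            rw [← mul_inv]; norm_num
          rw [hcdef, mul_inv, h22]
          ring
        rw [hcc, map_mul, map_mul, map_mul, chiF_inv F hδ,
          chiF_mul_self F (inv_ne_zero h2')]
        ring

lemma part1gen (k : ℕ) (α β : F) (g : ZMod p → ZMod (p ^ k))
    (hη : ∀ i j : ZMod p,
      quadraticChar F (1 + algebraMap (ZMod p) F i * α + algebraMap (ZMod p) F j * β) =
        quadraticChar F (1 + algebraMap (ZMod p) F i * α))
    (b₁ b₂ : ZMod p) :
    (∑ y₁ : ZMod p, ∑ y₂ : ZMod p,
      (quadraticChar F (1 + algebraMap (ZMod p) F y₁ * α + algebraMap (ZMod p) F y₂ * β) : ℂ) *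
        chr (p ^ k) (g y₁) * chr p (-(y₁ * y₂) + b₁ * y₁ + b₂ * y₂)) =
    (quadraticChar F (1 + algebraMap (ZMod p) F b₂ * α) : ℂ) * p *
      chr p (b₁ * b₂) * chr (p ^ k) (g b₂) := by
  have hsplit : ∀ y₁ y₂ : ZMod p,
      chr p (-(y₁ * y₂) + b₁ * y₁ + b₂ * y₂) = chr p (b₁ * y₁) * chr p (y₂ * (b₂ - y₁)) := by
    intro y₁ y₂
    rw [← chr_add]
    congr 1
    ring
  have step1 : (∑ y₁ : ZMod p, ∑ y₂ : ZMod p,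
      (quadraticChar F (1 + algebraMap (ZMod p) F y₁ * α + algebraMap (ZMod p) F y₂ * β) : ℂ) *
        chr (p ^ k) (g y₁) * chr p (-(y₁ * y₂) + b₁ * y₁ + b₂ * y₂))
      = ∑ y₁ : ZMod p,
        ((quadraticChar F (1 + algebraMap (ZMod p) F y₁ * α) : ℂ) *
          chr (p ^ k) (g y₁) * chr p (b₁ * y₁)) * (if b₂ - y₁ = 0 then (p : ℂ) else 0) := by
    refine Finset.sum_congr rfl fun y₁ _ => ?_
    rw [← chr_orth p (b₂ - y₁), Finset.mul_sum]
    refine Finset.sum_congr rfl fun y₂ _ => ?_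
    rw [hη y₁ y₂, hsplit y₁ y₂]
    ring
  rw [step1, Finset.sum_eq_single b₂]
  · simp only [sub_self, if_pos, if_true]
    ring
  · intro y₁ _ hy
    rw [if_neg (sub_ne_zero_of_ne (Ne.symm hy)), mul_zero]
  · intro h
    exact absurd (Finset.mem_univ b₂) h

lemma walsh_eq (k : ℕ) (hk : 1 ≤ k) (h2 : ringChar F ≠ 2) (α β : F)
    (g : ZMod p → ZMod (p ^ k))
    (hαβ : ∀ i j : ZMod p,
      1 + algebraMap (ZMod p) F i * α + algebraMap (ZMod p) F j * β ≠ 0)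
    (a : F) (b₁ b₂ : ZMod p) :
    walshF p k F (fun x y₁ y₂ =>
        lift p k (Algebra.trace (ZMod p) F (-(x ^ 2) /
            (4 * (1 + algebraMap (ZMod p) F y₁ * α + algebraMap (ZMod p) F y₂ * β)))
          - y₁ * y₂) + g y₁) a b₁ b₂
    = chiF F (-1) * gaussSum (chiF F) (psiF p F) *
        chr p (Algebra.trace (ZMod p) F (a ^ 2)) *
      (∑ y₁ : ZMod p, ∑ y₂ : ZMod p,
        (quadraticChar F (1 + algebraMap (ZMod p) F y₁ * α + algebraMap (ZMod p) F y₂ * β) : ℂ) *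
          chr (p ^ k) (g y₁) *
          chr p (-(y₁ * y₂) + (Algebra.trace (ZMod p) F (α * a ^ 2) - b₁) * y₁ +
            (Algebra.trace (ZMod p) F (β * a ^ 2) - b₂) * y₂)) := by
  haveI : NeZero (p ^ k) := ⟨pow_ne_zero k (NeZero.ne p)⟩
  set T := Algebra.trace (ZMod p) F with hT
  have hcombine : ∀ A B C D : ZMod p,
      chr p A * chr p B * chr p C * chr p D = chr p (A + B + C + D) := by
    intro A B C D
    rw [chr_add, chr_add, chr_add]
  have hswap : walshF p k F (fun x y₁ y₂ =>
        lift p k (T (-(x ^ 2) /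
            (4 * (1 + algebraMap (ZMod p) F y₁ * α + algebraMap (ZMod p) F y₂ * β)))
          - y₁ * y₂) + g y₁) a b₁ b₂
      = ∑ y₁ : ZMod p, ∑ y₂ : ZMod p, ∑ x : F,
          chr (p ^ k) (lift p k (T (-(x ^ 2) /
              (4 * (1 + algebraMap (ZMod p) F y₁ * α + algebraMap (ZMod p) F y₂ * β)))
            - y₁ * y₂) + g y₁) * chr p (-(T (a * x) + b₁ * y₁ + b₂ * y₂)) := by
    rw [walshF, Finset.sum_comm]
    exact Finset.sum_congr rfl fun y₁ _ => Finset.sum_comm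
  rw [hswap]
  rw [Finset.mul_sum]
  refine Finset.sum_congr rfl fun y₁ _ => ?_
  rw [Finset.mul_sum]
  refine Finset.sum_congr rfl fun y₂ _ => ?_
  set δ : F := 1 + algebraMap (ZMod p) F y₁ * α + algebraMap (ZMod p) F y₂ * β with hδdef
  have hδ : δ ≠ 0 := hαβ y₁ y₂
  have hbody : ∀ x : F,
      chr (p ^ k) (lift p k (T (-(x ^ 2) / (4 * δ)) - y₁ * y₂) + g y₁) *
        chr p (-(T (a * x) + b₁ * y₁ + b₂ * y₂))
      = psiF p F (-(x ^ 2) / (4 * δ) - a * x) *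
          (chr p (-(y₁ * y₂)) * chr (p ^ k) (g y₁) * chr p (-(b₁ * y₁)) *
            chr p (-(b₂ * y₂))) := by
    intro x
    have e1 : T (-(x ^ 2) / (4 * δ)) - y₁ * y₂
        = T (-(x ^ 2) / (4 * δ)) + -(y₁ * y₂) := sub_eq_add_neg _ _
    have e2 : -(T (a * x) + b₁ * y₁ + b₂ * y₂)
        = -(T (a * x)) + -(b₁ * y₁) + -(b₂ * y₂) := by ring
    have e3 : psiF p F (-(x ^ 2) / (4 * δ) - a * x)
        = chr p (T (-(x ^ 2) / (4 * δ))) * chr p (-(T (a * x))) := by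
      rw [psiF_apply, ← hT, map_sub, sub_eq_add_neg, chr_add]
    rw [chr_add, chr_lift p k hk, e1, chr_add, e2, chr_add, chr_add, e3]
    ring
  rw [Finset.sum_congr rfl fun x _ => hbody x, ← Finset.sum_mul, key p F h2 hδ a]
  have hψδ : psiF p F (δ * a ^ 2)
      = chr p (T (a ^ 2) + y₁ * T (α * a ^ 2) + y₂ * T (β * a ^ 2)) := by
    have hδa : δ * a ^ 2 = a ^ 2 + y₁ • (α * a ^ 2) + y₂ • (β * a ^ 2) := by
      rw [Algebra.smul_def, Algebra.smul_def, hδdef]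
      ring
    rw [psiF_apply, ← hT, hδa, map_add, map_add, map_smul, map_smul, smul_eq_mul, smul_eq_mul]
  rw [hψδ]
  have harg : T (a ^ 2) + y₁ * T (α * a ^ 2) + y₂ * T (β * a ^ 2) + -(y₁ * y₂) +
        -(b₁ * y₁) + -(b₂ * y₂)
      = T (a ^ 2) + (-(y₁ * y₂) + (T (α * a ^ 2) - b₁) * y₁ + (T (β * a ^ 2) - b₂) * y₂) := by
    ring
  have lhs_eq : chiF F (-1) * chiF F δ *
        chr p (T (a ^ 2) + y₁ * T (α * a ^ 2) + y₂ * T (β * a ^ 2)) *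
        gaussSum (chiF F) (psiF p F) *
        (chr p (-(y₁ * y₂)) * chr (p ^ k) (g y₁) * chr p (-(b₁ * y₁)) * chr p (-(b₂ * y₂)))
      = chiF F (-1) * gaussSum (chiF F) (psiF p F) * chiF F δ * chr (p ^ k) (g y₁) *
          (chr p (T (a ^ 2) + y₁ * T (α * a ^ 2) + y₂ * T (β * a ^ 2)) * chr p (-(y₁ * y₂)) *
            chr p (-(b₁ * y₁)) * chr p (-(b₂ * y₂))) := by ring
  rw [lhs_eq, hcombine, harg, chr_add]
  simp only [chiF_apply]
  ring

end Field

theorem stmt_17 (p k m : ℕ) [NeZero p] [Fact p.Prime] (hodd : Odd p) (hk : 1 ≤ k) (hm : 2 ≤ m)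
    (F : Type*) [Field F] [Fintype F] [DecidableEq F] [Algebra (ZMod p) F]
    (hF : Fintype.card F = p ^ m)
    (α β : F) (hα : α ≠ 0) (hβ : β ≠ 0)
    (hαβ : ∀ i j : ZMod p,
      1 + algebraMap (ZMod p) F i * α + algebraMap (ZMod p) F j * β ≠ 0)
    (g : ZMod p → ZMod (p ^ k))
    (hη : ∀ i j : ZMod p,
      quadraticChar F (1 + algebraMap (ZMod p) F i * α + algebraMap (ZMod p) F j * β) =
        quadraticChar F (1 + algebraMap (ZMod p) F i * α)) :
    (∀ b₁ b₂ : ZMod p,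
      (∑ y₁ : ZMod p, ∑ y₂ : ZMod p,
        (quadraticChar F (1 + algebraMap (ZMod p) F y₁ * α + algebraMap (ZMod p) F y₂ * β) : ℂ) *
          chr (p ^ k) (g y₁) * chr p (-(y₁ * y₂) + b₁ * y₁ + b₂ * y₂)) =
      (quadraticChar F (1 + algebraMap (ZMod p) F b₂ * α) : ℂ) * p *
        chr p (b₁ * b₂) * chr (p ^ k) (g b₂)) ∧
    (∀ (a : F) (b₁ b₂ : ZMod p),
      ‖(walshF p k F (fun x y₁ y₂ =>
          lift p k (Algebra.trace (ZMod p) F (-(x ^ 2) /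
              (4 * (1 + algebraMap (ZMod p) F y₁ * α + algebraMap (ZMod p) F y₂ * β)))
            - y₁ * y₂) + g y₁) a b₁ b₂)‖ = Real.sqrt ((p : ℝ) ^ m) * p) ∧
    ((∃ i₁ i₂ : ZMod p,
        quadraticChar F (1 + algebraMap (ZMod p) F i₁ * α) ≠
          quadraticChar F (1 + algebraMap (ZMod p) F i₂ * α)) →
      ¬ ∃ (c : ℂ) (Fss : F → ZMod p → ZMod p → ZMod (p ^ k)),
        ∀ (a : F) (b₁ b₂ : ZMod p),
          walshF p k F (fun x y₁ y₂ =>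
              lift p k (Algebra.trace (ZMod p) F (-(x ^ 2) /
                  (4 * (1 + algebraMap (ZMod p) F y₁ * α + algebraMap (ZMod p) F y₂ * β)))
                - y₁ * y₂) + g y₁) a b₁ b₂ =
            c * ((Real.sqrt ((p : ℝ) ^ m) : ℂ) * p) * chr (p ^ k) (Fss a b₁ b₂)) := by
  haveI : NeZero (p ^ k) := ⟨pow_ne_zero k (NeZero.ne p)⟩
  have hp2 : p ≠ 2 := by
    rintro rfl
    simp [Nat.odd_iff] at hodd
  have h2 : ringChar F ≠ 2 := by rw [ringCharF p F]; exact hp2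
  have hne : ∀ i : ZMod p, 1 + algebraMap (ZMod p) F i * α ≠ 0 := fun i => by
    have h := hαβ i 0
    simpa using h
  have hpC : (p : ℂ) ≠ 0 := Nat.cast_ne_zero.mpr (NeZero.ne p)
  have hGne : gaussSum (chiF F) (psiF p F) ≠ 0 := by
    intro h
    have h' := gauss_mul_conj p F h2
    rw [h, zero_mul] at h'
    exact Nat.cast_ne_zero.mpr Fintype.card_ne_zero h'.symm
  have habsχ : ∀ x : F, x ≠ 0 → ‖((quadraticChar F x : ℤ) : ℂ)‖ = 1 := by
    intro x hx
    have h1 : ‖((quadraticChar F x : ℤ) : ℂ)‖ *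
        ‖((quadraticChar F x : ℤ) : ℂ)‖ = 1 := by
      rw [← chiF_apply, ← norm_mul, chiF_mul_self F hx, norm_one]
    rcases mul_self_eq_one_iff.mp h1 with h | h
    · exact h
    · exfalso
      have := norm_nonneg ((quadraticChar F x : ℤ) : ℂ)
      rw [h] at this
      linarith
  have habsG : ‖gaussSum (chiF F) (psiF p F)‖ = Real.sqrt ((p : ℝ) ^ m) := by
    have h' := gauss_mul_conj p F h2
    rw [Complex.mul_conj] at h'
    have hns : Complex.normSq (gaussSum (chiF F) (psiF p F)) = (p : ℝ) ^ m := by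
      have : (Complex.normSq (gaussSum (chiF F) (psiF p F)) : ℂ) = (((p : ℝ) ^ m : ℝ) : ℂ) := by
        rw [h', hF]
        push_cast
        norm_num
      exact_mod_cast this
    rw [Complex.norm_def, hns]
  refine ⟨fun b₁ b₂ => part1gen p F k α β g hη b₁ b₂, ?_, ?_⟩
  · -- generalized bentness
    intro a b₁ b₂
    rw [walsh_eq p F k hk h2 α β g hαβ a b₁ b₂, part1gen p F k α β g hη _ _]
    simp only [norm_mul, chiF_apply]
    rw [abs_chr, abs_chr, abs_chr, habsG,
      habsχ _ (neg_ne_zero.mpr (one_ne_zero (α := F))), habsχ _ (hne _), Complex.norm_natCast]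
    ring
  · -- non weak regularity
    rintro ⟨i₁, i₂, hi⟩ ⟨c, Fss, hws⟩
    have hw : ∀ i : ZMod p,
        chiF F (-1) * gaussSum (chiF F) (psiF p F) *
          ((quadraticChar F (1 + algebraMap (ZMod p) F i * α) : ℂ) * p * chr (p ^ k) (g i))
        = c * ((Real.sqrt ((p : ℝ) ^ m) : ℂ) * p) * chr (p ^ k) (Fss 0 0 (-i)) := by
      intro i
      have h := hws 0 0 (-i)
      rw [walsh_eq p F k hk h2 α β g hαβ 0 0 (-i), part1gen p F k α β g hη _ _] at h
      simp only [chiF_apply] at h ⊢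
      simp only [ne_eq, OfNat.ofNat_ne_zero, not_false_eq_true, zero_pow, mul_zero, map_zero,
        zero_sub, neg_neg, sub_zero, sub_self, zero_mul, chr_zero, mul_one, one_mul] at h
      linear_combination h
    set G := gaussSum (chiF F) (psiF p F) with hG
    set u₁ := chr (p ^ k) (g i₁)
    set u₂ := chr (p ^ k) (g i₂)
    set w₁ := chr (p ^ k) (Fss 0 0 (-i₁))
    set w₂ := chr (p ^ k) (Fss 0 0 (-i₂))
    set e₁ : ℂ := ((quadraticChar F (1 + algebraMap (ZMod p) F i₁ * α) : ℤ) : ℂ) with he₁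
    set e₂ : ℂ := ((quadraticChar F (1 + algebraMap (ZMod p) F i₂ * α) : ℤ) : ℂ) with he₂
    have hKne : chiF F (-1) * G * (p : ℂ) ≠ 0 :=
      mul_ne_zero (mul_ne_zero (chiF_ne_zero F (neg_ne_zero.mpr one_ne_zero)) hGne) hpC
    have heq : e₁ * u₁ * w₂ = e₂ * u₂ * w₁ := by
      have h1 := hw i₁
      have h2' := hw i₂
      have hmm : chiF F (-1) * G * (p : ℂ) * (e₁ * u₁ * w₂)
          = chiF F (-1) * G * (p : ℂ) * (e₂ * u₂ * w₁) := by
        calc chiF F (-1) * G * (p : ℂ) * (e₁ * u₁ * w₂)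
            = (chiF F (-1) * G * (e₁ * p * u₁)) * w₂ := by ring
          _ = (c * ((Real.sqrt ((p : ℝ) ^ m) : ℂ) * p) * w₁) * w₂ := by rw [h1]
          _ = (c * ((Real.sqrt ((p : ℝ) ^ m) : ℂ) * p) * w₂) * w₁ := by ring
          _ = (chiF F (-1) * G * (e₂ * p * u₂)) * w₁ := by rw [h2']
          _ = chiF F (-1) * G * (p : ℂ) * (e₂ * u₂ * w₁) := by ring
      exact mul_left_cancel₀ hKne hmm
    have hpow : e₁ ^ (p ^ k) = e₂ ^ (p ^ k) := by
      have h := congrArg (fun z : ℂ => z ^ (p ^ k)) heq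
      simp only [mul_pow] at h
      rw [chr_pow_self, chr_pow_self, chr_pow_self, chr_pow_self] at h
      simpa using h
    have hoddpk : Odd (p ^ k) := hodd.pow
    rcases quadraticChar_dichotomy (hne i₁) with hd1 | hd1 <;>
      rcases quadraticChar_dichotomy (hne i₂) with hd2 | hd2
    · exact hi (hd1.trans hd2.symm)
    · rw [he₁, he₂, hd1, hd2] at hpow
      simp only [Int.cast_one, Int.cast_neg, one_pow, hoddpk.neg_one_pow] at hpow
      norm_num at hpow
    · rw [he₁, he₂, hd1, hd2] at hpow
      simp only [Int.cast_one, Int.cast_neg, one_pow, hoddpk.neg_one_pow] at hpow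
      norm_num at hpow
    · exact hi (hd1.trans hd2.symm)
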